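/- Let L(w) = (1/m)∑_{i=1}^m exp(-wᵀx_i), and let ℓ(w) ∈ R^m be the vector with entries exp(-wᵀx_i). Let γ = max_{‖u‖=1} min_i x_iᵀu > 0. Then ‖∇L(w)‖ ≥ γ · L(w) for every w, i.e., the normalized gradient magnitude ‖Xᵀℓ(w)‖/‖ℓ(w)‖₁ is at least the max-margin γ. -/

import Mathlib

open Filter Finset Real

/-- `‖∇L(w)‖ ≥ γ L(w)` for `L(w) = (1/m) ∑ exp(-wᵀx_i)` when the data
has margin `γ > 0` witnessed by a unit vector `u` with `⟪u, x i⟫ ≥ γ` for all `i`.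
Here `∇L(w) = -(1/m) ∑ exp(-wᵀx_i) • x_i`. -/
theorem grad_norm_ge_margin_times_loss
    {d m : ℕ} (hm : 0 < m)
    (x : Fin m → EuclideanSpace ℝ (Fin d)) (γ : ℝ) (hγ : 0 < γ)
    (u : EuclideanSpace ℝ (Fin d)) (hu : ‖u‖ = 1)
    (hmargin : ∀ i, γ ≤ (inner ℝ u (x i) : ℝ))
    (w : EuclideanSpace ℝ (Fin d)) :
    γ * ((1 / (m : ℝ)) * ∑ i, Real.exp (-(inner ℝ w (x i) : ℝ)))
      ≤ ‖-(1 / (m : ℝ)) • ∑ i, Real.exp (-(inner ℝ w (x i) : ℝ)) • x i‖ := by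
  set S : EuclideanSpace ℝ (Fin d) := ∑ i, Real.exp (-(inner ℝ w (x i) : ℝ)) • x i with hS
  have hnorm : ‖-(1 / (m : ℝ)) • S‖ = (1 / (m : ℝ)) * ‖S‖ := by
    rw [norm_smul]
    congr 1
    rw [Real.norm_eq_abs, abs_neg, abs_of_nonneg (by positivity)]
  rw [hnorm]
  have hinner : (inner ℝ u S : ℝ) = ∑ i, Real.exp (-(inner ℝ w (x i) : ℝ)) * (inner ℝ u (x i) : ℝ) := by
    simp [hS, inner_sum, real_inner_smul_right, Finset.mul_sum, mul_left_comm]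
  have h1 : γ * ∑ i, Real.exp (-(inner ℝ w (x i) : ℝ)) ≤ (inner ℝ u S : ℝ) := by
    rw [hinner, Finset.mul_sum]
    apply Finset.sum_le_sum
    intro i _
    rw [mul_comm γ]
    exact mul_le_mul_of_nonneg_left (hmargin i) (Real.exp_pos _).le
  have h2 : (inner ℝ u S : ℝ) ≤ ‖S‖ := by
    calc (inner ℝ u S : ℝ) ≤ ‖u‖ * ‖S‖ := real_inner_le_norm u S
    _ = ‖S‖ := by rw [hu, one_mul]
  have hmpos : (0:ℝ) < 1 / m := by positivity
  nlinarith [h1.trans h2]
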